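/- Let M = (S, ρ) be a matroid scheme and a an atom of S with ρ(a) = 0 (a loop). Then the deletion M − a is isomorphic to the contraction M/a; explicitly, the map φ: S_{≥a} → S_{≱a} sending z to z∖a (the complement of a in the Boolean lattice S_{≤z}) is an order isomorphism satisfying ρ(z) = ρ(φ(z)) for all z ∈ S_{≥a}. -/

import Mathlib

/-- The set of minimal upper bounds of `x` and `y` (denoted `x ∨ y` in the paper). -/
def mub {S : Type*} [PartialOrder S] (x y : S) : Set S :=
  {u | x ≤ u ∧ y ≤ u ∧ ∀ v, x ≤ v → y ≤ v → v ≤ u → v = u}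

/-- The set of maximal lower bounds of `x` and `y` (denoted `x ∧ y` in the paper). -/
def mlb {S : Type*} [PartialOrder S] (x y : S) : Set S :=
  {l | l ≤ x ∧ l ≤ y ∧ ∀ m, m ≤ x → m ≤ y → l ≤ m → m = l}

/-- The set of minimal upper bounds of a subset `T`. -/
def mubSet {S : Type*} [PartialOrder S] (T : Set S) : Set S :=
  {u | (∀ t ∈ T, t ≤ u) ∧ ∀ v, (∀ t ∈ T, t ≤ v) → v ≤ u → v = u}

/-- The number of atoms below `x`, i.e. `|x|`, the rank of `x` in a simplicial poset. -/
noncomputable def natRank {S : Type*} [PartialOrder S] [OrderBot S] (x : S) : ℕ :=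
  Nat.card {a : S // IsAtom a ∧ a ≤ x}

/-- A finite bounded-below poset is simplicial if every lower interval is isomorphic to
the Boolean lattice of subsets of the set of atoms below. -/
def IsSimplicialPoset (S : Type*) [PartialOrder S] [OrderBot S] [Fintype S] : Prop :=
  ∀ x : S, Nonempty (Set.Iic x ≃o Set {a : S // IsAtom a ∧ a ≤ x})

/-- A matroid scheme: a rank function `ρ` on a finite simplicial poset `S`
satisfying (M1)–(M5). -/
structure IsMatroidScheme {S : Type*} [PartialOrder S] [OrderBot S] [Fintype S]
    (ρ : S → ℕ) : Prop where
  simplicial : IsSimplicialPoset S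
  M1 : ∀ x : S, ρ x ≤ natRank x
  M2 : ∀ ⦃x y : S⦄, x ≤ y → ρ x ≤ ρ y
  M3 : ∀ x y u l : S, u ∈ mub x y → l ∈ mlb x y → ρ u + ρ l ≤ ρ x + ρ y
  M4 : ∀ x y l : S, l ∈ mlb x y → ρ x = ρ l → (mub x y).Nonempty
  M5 : ∀ x y : S, ρ x < ρ y →
    ∃ a : S, IsAtom a ∧ a ≤ y ∧ ¬ a ≤ x ∧ (mub x a).Nonempty

/-- `cl` is the closure operator of a matroid scheme `(S, ρ)`:
`cl x` is the greatest element above `x` of the same rank. -/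
def IsClosureFun {S : Type*} [PartialOrder S] (ρ : S → ℕ) (cl : S → S) : Prop :=
  ∀ x : S, x ≤ cl x ∧ ρ (cl x) = ρ x ∧ ∀ y : S, x ≤ y → ρ y = ρ x → y ≤ cl x

/-- The bases of a matroid scheme: the maximal independent elements. -/
def Bases {S : Type*} [PartialOrder S] [OrderBot S] (ρ : S → ℕ) : Set S :=
  {x | ρ x = natRank x ∧ ∀ w, ρ w = natRank w → x ≤ w → w = x}

/-- The circuits of a matroid scheme: the minimal dependent elements. -/
def Circuits {S : Type*} [PartialOrder S] [OrderBot S] (ρ : S → ℕ) : Set S :=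
  {x | ρ x < natRank x ∧ ∀ y, ρ y < natRank y → y ≤ x → y = x}

/-- `c` is the complement `x ∖ a` of `a` in the Boolean lattice `S_{≤ x}`. -/
def IsComplementIn {S : Type*} [PartialOrder S] [OrderBot S] (c a x : S) : Prop :=
  c ≤ x ∧ a ≤ x ∧ (∀ l : S, l ≤ c → l ≤ a → l = ⊥) ∧
    (∀ u : S, u ≤ x → c ≤ u → a ≤ u → u = x)

/-- The rank of a matroid scheme: the common value of `ρ` on maximal elements
(equal to the maximum value of `ρ`). -/
noncomputable def schemeRank {S : Type*} [Fintype S] (ρ : S → ℕ) : ℕ :=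
  sSup (Set.range ρ)

/-- The Tutte polynomial of a matroid scheme, as a two-variable integer function. -/
noncomputable def tutte {S : Type*} [PartialOrder S] [OrderBot S] [Fintype S]
    (ρ : S → ℕ) (x y : ℤ) : ℤ :=
  ∑ w : S, (x - 1) ^ (schemeRank ρ - ρ w) * (y - 1) ^ (natRank w - ρ w)

/-- An element of a poset is an order-atom if it covers a global minimum. -/
def OrdAtom {P : Type*} [PartialOrder P] (a : P) : Prop :=
  ∃ b : P, (∀ z : P, b ≤ z) ∧ b ⋖ a

/-- A partial order is a geometric lattice: it is bounded below, every pair has a least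
upper bound and greatest lower bound, it is atomistic, and it is (upper) semimodular. -/
def IsGeomLatOrder (P : Type*) [PartialOrder P] : Prop :=
  (∃ b : P, ∀ x : P, b ≤ x) ∧
  (∀ x y : P, ∃ u : P, IsLUB {x, y} u) ∧
  (∀ x y : P, ∃ l : P, IsGLB {x, y} l) ∧
  (∀ x : P, IsLUB {a : P | OrdAtom a ∧ a ≤ x} x) ∧
  (∀ x y m j : P, IsGLB {x, y} m → IsLUB {x, y} j → m ⋖ x → y ⋖ j)

/-- A geometric poset: a finite bounded-below poset with rank function `rk`
satisfying (G1) and (G2). -/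
def IsGeometricPoset (P : Type*) [PartialOrder P] [OrderBot P] [Fintype P]
    (rk : P → ℕ) : Prop :=
  rk ⊥ = 0 ∧
  (∀ ⦃x y : P⦄, x ≤ y → rk x ≤ rk y) ∧
  (∀ x y : P, x ⋖ y → rk y = rk x + 1) ∧
  (∀ m : P, IsMax m → IsGeomLatOrder (Set.Iic m)) ∧
  (∀ (x : P) (A : Set P), (∀ a ∈ A, IsAtom a) →
    ∀ y ∈ mubSet A, rk x < rk y → rk y = Nat.card A →
      ∃ a ∈ A, ¬ a ≤ x ∧ ∃ w : P, x ≤ w ∧ a ≤ w)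

set_option linter.unusedSectionVars false


section Aux
variable {S : Type*} [PartialOrder S] [OrderBot S] [Fintype S]

lemma ms_iso_bot {u : S} (e : Set.Iic u ≃o Set {a : S // IsAtom a ∧ a ≤ u}) :
    e ⟨⊥, bot_le⟩ = (∅ : Set {a : S // IsAtom a ∧ a ≤ u}) := by
  have h2 := e.monotone (show (⟨⊥, bot_le⟩ : Set.Iic u) ≤ e.symm ∅ from bot_le)
  rw [e.apply_symm_apply] at h2
  exact Set.subset_empty_iff.mp h2

lemma ms_iso_top {u : S} (e : Set.Iic u ≃o Set {a : S // IsAtom a ∧ a ≤ u}) :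
    e ⟨u, le_refl u⟩ = (Set.univ : Set {a : S // IsAtom a ∧ a ≤ u}) := by
  have h2 := e.monotone (show e.symm Set.univ ≤ ⟨u, le_refl u⟩ from (e.symm Set.univ).2)
  rw [e.apply_symm_apply] at h2
  exact Set.eq_univ_of_univ_subset h2

/-- If every common lower bound of `c` and `a` is `⊥`, then their images in the
Boolean picture of `Iic z` are disjoint. -/
lemma ms_inter_empty {z c a : S} (e : Set.Iic z ≃o Set {b : S // IsAtom b ∧ b ≤ z})
    (hc : c ≤ z) (haz : a ≤ z) (h : ∀ l : S, l ≤ c → l ≤ a → l = ⊥) :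
    e ⟨c, hc⟩ ∩ e ⟨a, haz⟩ = ∅ := by
  set m : Set.Iic z := e.symm (e ⟨c, hc⟩ ∩ e ⟨a, haz⟩) with hm
  have hmc : m ≤ ⟨c, hc⟩ := by
    have := e.symm.monotone (show e ⟨c, hc⟩ ∩ e ⟨a, haz⟩ ≤ e ⟨c, hc⟩ from
      Set.inter_subset_left)
    rwa [e.symm_apply_apply] at this
  have hma : m ≤ ⟨a, haz⟩ := by
    have := e.symm.monotone (show e ⟨c, hc⟩ ∩ e ⟨a, haz⟩ ≤ e ⟨a, haz⟩ from
      Set.inter_subset_right)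
    rwa [e.symm_apply_apply] at this
  have hmbot : m = ⟨⊥, bot_le⟩ := Subtype.ext (h m.1 hmc hma)
  have : e m = e ⟨c, hc⟩ ∩ e ⟨a, haz⟩ := by rw [hm, e.apply_symm_apply]
  rw [hmbot, ms_iso_bot e] at this
  exact this.symm

/-- The image of a complement is the set complement. -/
lemma ms_compl_image {z c a : S} (e : Set.Iic z ≃o Set {b : S // IsAtom b ∧ b ≤ z})
    (hc : IsComplementIn c a z) :
    e ⟨c, hc.1⟩ = (e ⟨a, hc.2.1⟩)ᶜ := by
  have hdisj : e ⟨c, hc.1⟩ ∩ e ⟨a, hc.2.1⟩ = ∅ := ms_inter_empty e hc.1 hc.2.1 hc.2.2.1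
  set j : Set.Iic z := e.symm (e ⟨c, hc.1⟩ ∪ e ⟨a, hc.2.1⟩) with hj
  have hcj : (⟨c, hc.1⟩ : Set.Iic z) ≤ j := by
    have := e.symm.monotone (show e ⟨c, hc.1⟩ ≤ e ⟨c, hc.1⟩ ∪ e ⟨a, hc.2.1⟩ from
      Set.subset_union_left)
    rwa [e.symm_apply_apply] at this
  have haj : (⟨a, hc.2.1⟩ : Set.Iic z) ≤ j := by
    have := e.symm.monotone (show e ⟨a, hc.2.1⟩ ≤ e ⟨c, hc.1⟩ ∪ e ⟨a, hc.2.1⟩ from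
      Set.subset_union_right)
    rwa [e.symm_apply_apply] at this
  have hjz : j.1 = z := hc.2.2.2 j.1 j.2 hcj haj
  have hjtop : j = ⟨z, le_refl z⟩ := Subtype.ext hjz
  have huniv : e ⟨c, hc.1⟩ ∪ e ⟨a, hc.2.1⟩ = Set.univ := by
    have : e j = e ⟨c, hc.1⟩ ∪ e ⟨a, hc.2.1⟩ := by rw [hj, e.apply_symm_apply]
    rw [hjtop, ms_iso_top e] at this
    exact this.symm
  ext x
  constructor
  · intro hx hxa
    exact absurd (hdisj ▸ ⟨hx, hxa⟩ : x ∈ (∅ : Set _)) (Set.notMem_empty x)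
  · intro hx
    rcases (huniv ▸ Set.mem_univ x : x ∈ e ⟨c, hc.1⟩ ∪ e ⟨a, hc.2.1⟩) with h' | h'
    · exact h'
    · exact absurd h' hx

/-- Monotonicity / uniqueness of complements: anything meeting `a` trivially and
lying below `z` is below the complement of `a` in `z`. -/
lemma ms_le_compl {c c2 a z : S} (hsz : Nonempty (Set.Iic z ≃o Set {b : S // IsAtom b ∧ b ≤ z}))
    (hca : ∀ l : S, l ≤ c → l ≤ a → l = ⊥) (hcz : c ≤ z)
    (hc2 : IsComplementIn c2 a z) : c ≤ c2 := by
  obtain ⟨e⟩ := hsz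
  have h1 : e ⟨c, hcz⟩ ∩ e ⟨a, hc2.2.1⟩ = ∅ := ms_inter_empty e hcz hc2.2.1 hca
  have h2 : e ⟨c2, hc2.1⟩ = (e ⟨a, hc2.2.1⟩)ᶜ := ms_compl_image e hc2
  have hsub : e ⟨c, hcz⟩ ≤ e ⟨c2, hc2.1⟩ := by
    rw [h2]
    intro x hx hxa
    exact absurd (h1 ▸ ⟨hx, hxa⟩ : x ∈ (∅ : Set _)) (Set.notMem_empty x)
  exact Subtype.coe_le_coe.mpr (e.le_iff_le.mp hsub)

/-- Uniqueness of the element with a given complement, given a common upper bound. -/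
lemma ms_z_unique_of_ub {a c z1 z2 u : S}
    (hsu : Nonempty (Set.Iic u ≃o Set {b : S // IsAtom b ∧ b ≤ u}))
    (h1 : IsComplementIn c a z1) (h2 : IsComplementIn c a z2)
    (hu1 : z1 ≤ u) (hu2 : z2 ≤ u) : z1 = z2 := by
  obtain ⟨e⟩ := hsu
  have hcu : c ≤ u := h1.1.trans hu1
  have hau : a ≤ u := h1.2.1.trans hu1
  set j : Set.Iic u := e.symm (e ⟨c, hcu⟩ ∪ e ⟨a, hau⟩) with hj
  have hcj : (⟨c, hcu⟩ : Set.Iic u) ≤ j := by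
    have := e.symm.monotone (show e ⟨c, hcu⟩ ≤ e ⟨c, hcu⟩ ∪ e ⟨a, hau⟩ from
      Set.subset_union_left)
    rwa [e.symm_apply_apply] at this
  have haj : (⟨a, hau⟩ : Set.Iic u) ≤ j := by
    have := e.symm.monotone (show e ⟨a, hau⟩ ≤ e ⟨c, hcu⟩ ∪ e ⟨a, hau⟩ from
      Set.subset_union_right)
    rwa [e.symm_apply_apply] at this
  have key : ∀ z : S, ∀ hz : z ≤ u, IsComplementIn c a z → j.1 = z := by
    intro z hz hcz
    have hjz : j ≤ ⟨z, hz⟩ := by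
      have hsub : e ⟨c, hcu⟩ ∪ e ⟨a, hau⟩ ≤ e ⟨z, hz⟩ := by
        apply Set.union_subset
        · exact e.monotone (show (⟨c, hcu⟩ : Set.Iic u) ≤ ⟨z, hz⟩ from hcz.1)
        · exact e.monotone (show (⟨a, hau⟩ : Set.Iic u) ≤ ⟨z, hz⟩ from hcz.2.1)
      have := e.symm.monotone hsub
      rw [e.symm_apply_apply] at this; exact this
    exact hcz.2.2.2 j.1 hjz hcj haj
  rw [← key z1 hu1 h1, key z2 hu2 h2]

/-- Existence of complements in a simplicial poset. -/
lemma ms_compl_exists (hs : IsSimplicialPoset S) {a z : S} (haz : a ≤ z) :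
    ∃ c : S, IsComplementIn c a z := by
  obtain ⟨e⟩ := hs z
  refine ⟨(e.symm (e ⟨a, haz⟩)ᶜ).1, (e.symm (e ⟨a, haz⟩)ᶜ).2, haz, ?_, ?_⟩
  · intro l hlc hla
    have hlz : l ≤ z := hla.trans haz
    have h1 : e ⟨l, hlz⟩ ≤ (e ⟨a, haz⟩)ᶜ := by
      have : (⟨l, hlz⟩ : Set.Iic z) ≤ e.symm (e ⟨a, haz⟩)ᶜ := hlc
      have := e.monotone this
      rwa [e.apply_symm_apply] at this
    have h2 : e ⟨l, hlz⟩ ≤ e ⟨a, haz⟩ := e.monotone (show (⟨l, hlz⟩ : Set.Iic z) ≤ ⟨a, haz⟩ from hla)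
    have : e ⟨l, hlz⟩ = (∅ : Set _) := by
      apply Set.subset_empty_iff.mp
      intro x hx
      exact absurd (h2 hx) (h1 hx)
    rw [← ms_iso_bot e] at this
    exact congrArg Subtype.val (e.injective this)
  · intro v hvz hcv hav
    have h1 : (e ⟨a, haz⟩)ᶜ ≤ e ⟨v, hvz⟩ := by
      have : e.symm (e ⟨a, haz⟩)ᶜ ≤ ⟨v, hvz⟩ := hcv
      have := e.monotone this
      rwa [e.apply_symm_apply] at this
    have h2 : e ⟨a, haz⟩ ≤ e ⟨v, hvz⟩ := e.monotone (show (⟨a, haz⟩ : Set.Iic z) ≤ ⟨v, hvz⟩ from hav)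
    have : e ⟨v, hvz⟩ = Set.univ := by
      apply Set.eq_univ_of_univ_subset
      intro x _
      by_cases hx : x ∈ e ⟨a, haz⟩
      · exact h2 hx
      · exact h1 hx
    rw [← ms_iso_top e] at this
    exact congrArg Subtype.val (e.injective this)

/-- Lifting a complement: given `x ≤ z`, `a ≤ z`, `¬ a ≤ x`, there is `v ≤ z` with
`x` the complement of `a` in `v`. -/
lemma ms_compl_lift (hs : IsSimplicialPoset S) {a x z : S} (ha : IsAtom a)
    (hxz : x ≤ z) (haz : a ≤ z) (hax : ¬ a ≤ x) :
    ∃ v : S, v ≤ z ∧ IsComplementIn x a v := by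
  obtain ⟨e⟩ := hs z
  set w : Set.Iic z := e.symm (e ⟨x, hxz⟩ ∪ e ⟨a, haz⟩) with hw
  have hxw : (⟨x, hxz⟩ : Set.Iic z) ≤ w := by
    have := e.symm.monotone (show e ⟨x, hxz⟩ ≤ e ⟨x, hxz⟩ ∪ e ⟨a, haz⟩ from
      Set.subset_union_left)
    rwa [e.symm_apply_apply] at this
  have haw : (⟨a, haz⟩ : Set.Iic z) ≤ w := by
    have := e.symm.monotone (show e ⟨a, haz⟩ ≤ e ⟨x, hxz⟩ ∪ e ⟨a, haz⟩ from
      Set.subset_union_right)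
    rwa [e.symm_apply_apply] at this
  refine ⟨w.1, w.2, hxw, haw, ?_, ?_⟩
  · intro l hlx hla
    rcases ha.le_iff.mp hla with h' | h'
    · exact h'
    · exact absurd (h' ▸ hlx) hax
  · intro v hvw hxv hav
    have hvz : v ≤ z := hvw.trans w.2
    have h1 : e ⟨x, hxz⟩ ∪ e ⟨a, haz⟩ ≤ e ⟨v, hvz⟩ := by
      apply Set.union_subset
      · exact e.monotone (show (⟨x, hxz⟩ : Set.Iic z) ≤ ⟨v, hvz⟩ from hxv)
      · exact e.monotone (show (⟨a, haz⟩ : Set.Iic z) ≤ ⟨v, hvz⟩ from hav)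
    have h2 : w ≤ ⟨v, hvz⟩ := by
      have := e.symm.monotone h1
      rw [e.symm_apply_apply] at this; exact this
    have h3 : (⟨v, hvz⟩ : Set.Iic z) ≤ w := hvw
    exact congrArg Subtype.val (le_antisymm h3 h2)

end Aux

section Matroid
variable {S : Type*} [PartialOrder S] [OrderBot S] [Fintype S] {ρ : S → ℕ}

lemma ms_rho_compl (h : IsMatroidScheme ρ) {a c z : S} (hloop : ρ a = 0)
    (hc : IsComplementIn c a z) : ρ c = ρ z := by
  have hz_mub : z ∈ mub a c :=
    ⟨hc.2.1, hc.1, fun v hav hcv hvz => hc.2.2.2 v hvz hcv hav⟩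
  have hbot_mlb : (⊥ : S) ∈ mlb a c :=
    ⟨bot_le, bot_le, fun m hma hmc _ => hc.2.2.1 m hmc hma⟩
  have h3 := h.M3 a c z ⊥ hz_mub hbot_mlb
  have h2 := h.M2 hc.1
  omega

lemma ms_z_unique (h : IsMatroidScheme ρ) {a c z1 z2 : S} (hloop : ρ a = 0)
    (h1 : IsComplementIn c a z1) (h2 : IsComplementIn c a z2) : z1 = z2 := by
  obtain ⟨l, hl, hlmax⟩ := Set.Finite.exists_maximalFor id
    {m : S | m ≤ z1 ∧ m ≤ z2 ∧ c ≤ m} (Set.toFinite _) ⟨c, h1.1, h2.1, le_refl c⟩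
  have hmlb : l ∈ mlb z1 z2 :=
    ⟨hl.1, hl.2.1, fun m hm1 hm2 hlm =>
      le_antisymm (hlmax ⟨hm1, hm2, hl.2.2.trans hlm⟩ hlm) hlm⟩
  have hrl : ρ z1 = ρ l := by
    have hcl := h.M2 hl.2.2
    have hlz := h.M2 hl.1
    have := ms_rho_compl h hloop h1
    omega
  obtain ⟨u, hu⟩ := h.M4 z1 z2 l hmlb hrl
  exact ms_z_unique_of_ub (h.simplicial u) h1 h2 hu.1 hu.2.1

lemma ms_z_exists (h : IsMatroidScheme ρ) {a x : S} (ha : IsAtom a) (hloop : ρ a = 0)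
    (hx : ¬ a ≤ x) : ∃ z : S, IsComplementIn x a z := by
  have hrbot : ρ (⊥ : S) = 0 := Nat.le_zero.mp (hloop ▸ h.M2 bot_le)
  have hbot : (⊥ : S) ∈ mlb a x := by
    refine ⟨bot_le, bot_le, fun m hma hmx _ => ?_⟩
    rcases ha.le_iff.mp hma with h' | h'
    · exact h'
    · exact absurd (h' ▸ hmx) hx
  obtain ⟨u, hu⟩ := h.M4 a x ⊥ hbot (by rw [hrbot, hloop])
  refine ⟨u, hu.2.1, hu.1, ?_, fun v hvu hxv hav => hu.2.2 v hav hxv hvu⟩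
  intro l hlx hla
  rcases ha.le_iff.mp hla with h' | h'
  · exact h'
  · exact absurd (h' ▸ hlx) hx

end Matroid



/-- Proposition 8.6: if `a` is a loop, then deletion and contraction by `a` are
isomorphic, via the map sending `z ∈ S_{≥a}` to the complement `z ∖ a` of `a` in
the Boolean lattice `S_{≤z}`; this map is an order isomorphism preserving `ρ`. -/
theorem statement14 {S : Type*} [PartialOrder S] [OrderBot S] [Fintype S]
    (ρ : S → ℕ) (h : IsMatroidScheme ρ) (a : S) (ha : IsAtom a) (hloop : ρ a = 0) :
    ∃ φ : {z : S // a ≤ z} ≃o {x : S // ¬ a ≤ x},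
      ∀ z : {z : S // a ≤ z},
        IsComplementIn (φ z).val a z.val ∧ ρ (φ z).val = ρ z.val := by
  classical
  have hcompl : ∀ z : {z : S // a ≤ z}, ∃ c : S, IsComplementIn c a z.val :=
    fun z => ms_compl_exists h.simplicial z.2
  have hzex : ∀ x : {x : S // ¬ a ≤ x}, ∃ z : S, IsComplementIn x.val a z :=
    fun x => ms_z_exists h ha hloop x.2
  have hnotle : ∀ (c z : S), IsComplementIn c a z → ¬ a ≤ c := by
    intro c z hc hac
    exact ha.1 (hc.2.2.1 a hac (le_refl a))
  set f : {z : S // a ≤ z} → {x : S // ¬ a ≤ x} := fun z =>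
    ⟨Classical.choose (hcompl z), hnotle _ _ (Classical.choose_spec (hcompl z))⟩ with hfdef
  have hf : ∀ z : {z : S // a ≤ z}, IsComplementIn (f z).val a z.val :=
    fun z => Classical.choose_spec (hcompl z)
  set g : {x : S // ¬ a ≤ x} → {z : S // a ≤ z} := fun x =>
    ⟨Classical.choose (hzex x), (Classical.choose_spec (hzex x)).2.1⟩ with hgdef
  have hg : ∀ x : {x : S // ¬ a ≤ x}, IsComplementIn x.val a (g x).val :=
    fun x => Classical.choose_spec (hzex x)
  have hfmono : ∀ z1 z2 : {z : S // a ≤ z}, z1 ≤ z2 → f z1 ≤ f z2 := by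
    intro z1 z2 h12
    have h12' : z1.val ≤ z2.val := h12
    have hv : (f z1).val ≤ (f z2).val :=
      ms_le_compl (h.simplicial z2.val) (hf z1).2.2.1 ((hf z1).1.trans h12') (hf z2)
    exact hv
  have hgmono : ∀ x1 x2 : {x : S // ¬ a ≤ x}, x1 ≤ x2 → g x1 ≤ g x2 := by
    intro x1 x2 h12
    have h12' : x1.val ≤ x2.val := h12
    obtain ⟨v, hvz, hv⟩ := ms_compl_lift h.simplicial ha
      ((hg x2).1.trans' h12') (g x2).2 x1.2
    have he : (g x1).val = v := ms_z_unique h hloop (hg x1) hv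
    have hv2 : (g x1).val ≤ (g x2).val := he.trans_le hvz
    exact hv2
  have hgf : ∀ z, g (f z) = z := by
    intro z
    exact Subtype.ext (ms_z_unique h hloop (hg (f z)) (hf z))
  have hfg : ∀ x, f (g x) = x := by
    intro x
    apply Subtype.ext
    apply le_antisymm
    · exact ms_le_compl (h.simplicial (g x).val) (hf (g x)).2.2.1 (hf (g x)).1 (hg x)
    · exact ms_le_compl (h.simplicial (g x).val) (hg x).2.2.1 (hg x).1 (hf (g x))
  refine ⟨⟨⟨f, g, hgf, hfg⟩, ?_⟩, fun z => ⟨hf z, ms_rho_compl h hloop (hf z)⟩⟩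
  intro z1 z2
  constructor
  · intro h12
    have := hgmono _ _ h12
    rwa [hgf, hgf] at this
  · exact hfmono z1 z2
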